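/- The ratio Z₁(n)/Z(n) for f = w1^2 w2^2 satisfies lim_{n→∞} log(n)·(Z₁(n)/Z(n)) = √(2π); in particular Z₁(n)/Z(n) → 0 like 1/log n. -/

import Mathlib

open Real MeasureTheory Filter Topology

/-- Partition function for `f(w1,w2) = w1^2 w2^2`. -/
noncomputable def Za (n : ℝ) : ℝ :=
  ∫ w1 : ℝ, ∫ w2 : ℝ,
    Real.exp (-(n * (w1 ^ 2 * w2 ^ 2))) *
      (1 / (2 * π) * Real.exp (-(w1 ^ 2 + w2 ^ 2) / 2))

/-- Weighted partition function with weight `|w1|` for `f(w1,w2) = w1^2 w2^2`. -/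
noncomputable def Z1a (n : ℝ) : ℝ :=
  ∫ w1 : ℝ, ∫ w2 : ℝ,
    |w1| * Real.exp (-(n * (w1 ^ 2 * w2 ^ 2))) *
      (1 / (2 * π) * Real.exp (-(w1 ^ 2 + w2 ^ 2) / 2))

/-! Auxiliary one-dimensional reductions. -/

noncomputable def Fa (n : ℝ) : ℝ := ∫ w : ℝ, Real.exp (-w^2/2) / Real.sqrt (2*n*w^2+1)
noncomputable def Ga (n : ℝ) : ℝ := ∫ w : ℝ, |w| * Real.exp (-w^2/2) / Real.sqrt (2*n*w^2+1)

lemma gauss_int : ∫ w : ℝ, Real.exp (-w^2/2) = Real.sqrt (2*π) := by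
  have h := integral_gaussian (1/2 : ℝ)
  rw [show π / (1/2 : ℝ) = 2*π by ring] at h
  rw [← h]
  congr 1; ext w; ring_nf

lemma gauss_L1 : Integrable (fun w : ℝ => Real.exp (-w^2/2)) := by
  have := integrable_exp_neg_mul_sq (by norm_num : (0:ℝ) < 1/2)
  convert this using 2 with w
  ring_nf

lemma gauss_abs_L1 : Integrable (fun w : ℝ => |w| * Real.exp (-w^2/2)) := by
  have := (integrable_mul_exp_neg_mul_sq (by norm_num : (0:ℝ) < 1/2)).abs
  convert this using 2 with w
  rw [abs_mul, abs_of_pos (Real.exp_pos _)]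
  congr 2
  ring_nf

lemma sqrt_denom_pos (n w : ℝ) (hn : 0 ≤ n) : 0 < Real.sqrt (2*n*w^2+1) := by
  apply Real.sqrt_pos.mpr; nlinarith [sq_nonneg w]

lemma sqrt_denom_ge_one (n w : ℝ) (hn : 0 ≤ n) : 1 ≤ Real.sqrt (2*n*w^2+1) := by
  have := Real.sqrt_le_sqrt (show (1:ℝ) ≤ 2*n*w^2+1 by nlinarith [sq_nonneg w])
  simpa using this

lemma Fa_integrand_integrable (n : ℝ) (hn : 0 ≤ n) :
    Integrable (fun w : ℝ => Real.exp (-w^2/2) / Real.sqrt (2*n*w^2+1)) := by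
  refine gauss_L1.mono ?_ ?_
  · exact (Continuous.div (by continuity) (by continuity)
      (fun w => ne_of_gt (sqrt_denom_pos n w hn))).aestronglyMeasurable
  · refine Eventually.of_forall (fun w => ?_)
    rw [Real.norm_eq_abs, Real.norm_eq_abs, abs_div, abs_of_pos (Real.exp_pos _),
      abs_of_pos (sqrt_denom_pos n w hn)]
    calc Real.exp (-w^2/2) / Real.sqrt (2*n*w^2+1) ≤ Real.exp (-w^2/2) / 1 := by
          apply div_le_div_of_nonneg_left (Real.exp_pos _).le one_pos (sqrt_denom_ge_one n w hn)
      _ = Real.exp (-w^2/2) := by rw [div_one]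

lemma Ga_integrand_integrable (n : ℝ) (hn : 0 ≤ n) :
    Integrable (fun w : ℝ => |w| * Real.exp (-w^2/2) / Real.sqrt (2*n*w^2+1)) := by
  refine gauss_abs_L1.mono ?_ ?_
  · exact (Continuous.div (by continuity) (by continuity)
      (fun w => ne_of_gt (sqrt_denom_pos n w hn))).aestronglyMeasurable
  · refine Eventually.of_forall (fun w => ?_)
    have h0 : 0 ≤ |w| * Real.exp (-w^2/2) := by positivity
    rw [Real.norm_eq_abs, Real.norm_eq_abs, abs_div, abs_of_nonneg h0,
      abs_of_pos (sqrt_denom_pos n w hn)]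
    calc |w| * Real.exp (-w^2/2) / Real.sqrt (2*n*w^2+1) ≤ |w| * Real.exp (-w^2/2) / 1 := by
          apply div_le_div_of_nonneg_left h0 one_pos (sqrt_denom_ge_one n w hn)
      _ = |w| * Real.exp (-w^2/2) := by rw [div_one]

lemma inner_int (n w1 : ℝ) (hn : 0 ≤ n) :
    ∫ w2 : ℝ, Real.exp (-(n * (w1 ^ 2 * w2 ^ 2))) *
      (1 / (2 * π) * Real.exp (-(w1 ^ 2 + w2 ^ 2) / 2))
    = Real.exp (-w1^2/2) / Real.sqrt (2*n*w1^2+1) / Real.sqrt (2*π) := by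
  have hpos : (0:ℝ) < n * w1^2 + 1/2 := by positivity
  have key : ∀ w2 : ℝ, Real.exp (-(n * (w1 ^ 2 * w2 ^ 2))) *
      (1 / (2 * π) * Real.exp (-(w1 ^ 2 + w2 ^ 2) / 2))
      = (1 / (2*π) * Real.exp (-w1^2/2)) * Real.exp (-(n*w1^2+1/2) * w2^2) := by
    intro w2
    rw [mul_comm, mul_assoc, mul_assoc, ← Real.exp_add, ← Real.exp_add]
    congr 2
    ring
  simp_rw [key]
  rw [integral_const_mul, integral_gaussian]
  have h2 : π / (n*w1^2+1/2) = 2*π / (2*n*w1^2+1) := by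
    rw [div_eq_div_iff (ne_of_gt hpos) (by positivity)]; ring
  rw [h2, Real.sqrt_div (by positivity : (0:ℝ) ≤ 2*π)]
  have hsq : Real.sqrt (2*π) * Real.sqrt (2*π) = 2*π := Real.mul_self_sqrt (by positivity)
  have hne : Real.sqrt (2*π) ≠ 0 := by positivity
  have hne2 : Real.sqrt (2*n*w1^2+1) ≠ 0 := by positivity
  field_simp
  have h3 : Real.sqrt 2 * Real.sqrt 2 = 2 := Real.mul_self_sqrt (by norm_num)
  have h4 : Real.sqrt π * Real.sqrt π = π := Real.mul_self_sqrt pi_pos.le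
  linear_combination hsq

lemma Za_eq (n : ℝ) (hn : 0 ≤ n) : Za n = Fa n / Real.sqrt (2*π) := by
  unfold Za Fa
  rw [← integral_div]
  congr 1
  funext w1
  exact inner_int n w1 hn

lemma Z1a_eq (n : ℝ) (hn : 0 ≤ n) : Z1a n = Ga n / Real.sqrt (2*π) := by
  unfold Z1a Ga
  rw [← integral_div]
  congr 1
  funext w1
  have : ∀ w2 : ℝ, |w1| * Real.exp (-(n * (w1 ^ 2 * w2 ^ 2))) *
      (1 / (2 * π) * Real.exp (-(w1 ^ 2 + w2 ^ 2) / 2))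
      = |w1| * (Real.exp (-(n * (w1 ^ 2 * w2 ^ 2))) *
      (1 / (2 * π) * Real.exp (-(w1 ^ 2 + w2 ^ 2) / 2))) := fun w2 => by ring
  simp_rw [this]
  rw [integral_const_mul, inner_int n w1 hn]
  ring

lemma arsinh_integral (n : ℝ) (hn : 0 < n) :
    ∫ x in Set.Ioc (-1:ℝ) 1, Real.sqrt (2*n) / Real.sqrt (2*n*x^2+1)
    = 2 * Real.arsinh (Real.sqrt (2*n)) := by
  have h2n : (0:ℝ) < 2*n := by linarith
  have hderiv : ∀ x ∈ Set.uIcc (-1:ℝ) 1, HasDerivAt (fun y => Real.arsinh (Real.sqrt (2*n) * y))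
      (Real.sqrt (2*n) / Real.sqrt (2*n*x^2+1)) x := by
    intro x _
    have h1 : HasDerivAt (fun y : ℝ => Real.sqrt (2*n) * y) (Real.sqrt (2*n)) x := by
      simpa using (hasDerivAt_id x).const_mul (Real.sqrt (2*n))
    have h2 := (Real.hasDerivAt_arsinh (Real.sqrt (2*n) * x)).comp x h1
    refine h2.congr_deriv ?_
    rw [mul_pow, Real.sq_sqrt h2n.le]
    rw [div_eq_inv_mul]
    congr 2
    ring
  have hcont : ContinuousOn (fun x => Real.sqrt (2*n) / Real.sqrt (2*n*x^2+1)) (Set.uIcc (-1:ℝ) 1) := by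
    apply ContinuousOn.div continuousOn_const (by fun_prop)
    intro x _
    have : (0:ℝ) < 2*n*x^2+1 := by nlinarith [sq_nonneg x]
    positivity
  have := intervalIntegral.integral_eq_sub_of_hasDerivAt hderiv
    (hcont.intervalIntegrable)
  rw [intervalIntegral.integral_of_le (by norm_num : (-1:ℝ) ≤ 1)] at this
  rw [this, mul_one, mul_neg_one, Real.arsinh_neg]
  ring

lemma sqrt_mul_abs_le (n w : ℝ) (hn : 0 ≤ n) :
    Real.sqrt (2*n) * |w| ≤ Real.sqrt (2*n*w^2+1) := by
  rw [← Real.sqrt_sq_eq_abs, ← Real.sqrt_mul (by linarith)]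
  exact Real.sqrt_le_sqrt (by nlinarith [sq_nonneg w])

lemma A_int (n : ℝ) (hn : 0 ≤ n) :
    Integrable (fun w : ℝ => Real.exp (-w^2/2) * (Real.sqrt (2*n) / Real.sqrt (2*n*w^2+1))) := by
  have : ∀ w : ℝ, Real.exp (-w^2/2) * (Real.sqrt (2*n) / Real.sqrt (2*n*w^2+1))
      = Real.sqrt (2*n) * (Real.exp (-w^2/2) / Real.sqrt (2*n*w^2+1)) := fun w => by ring
  simp_rw [this]
  exact (Fa_integrand_integrable n hn).const_mul _

lemma A_bounds (n : ℝ) (hn : 1 ≤ n) :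
    2 * Real.arsinh (Real.sqrt (2*n)) - 1
      ≤ ∫ w : ℝ, Real.exp (-w^2/2) * (Real.sqrt (2*n) / Real.sqrt (2*n*w^2+1)) ∧
    (∫ w : ℝ, Real.exp (-w^2/2) * (Real.sqrt (2*n) / Real.sqrt (2*n*w^2+1)))
      ≤ 2 * Real.arsinh (Real.sqrt (2*n)) + Real.sqrt (2*π) := by
  have hn0 : (0:ℝ) ≤ n := by linarith
  have hnp : (0:ℝ) < n := by linarith
  set f : ℝ → ℝ := fun w => Real.exp (-w^2/2) * (Real.sqrt (2*n) / Real.sqrt (2*n*w^2+1)) with hf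
  set q : ℝ → ℝ := fun w => Real.sqrt (2*n) / Real.sqrt (2*n*w^2+1) with hq
  have hqc : Continuous q := by
    apply Continuous.div continuous_const (by fun_prop)
    exact fun w => ne_of_gt (sqrt_denom_pos n w hn0)
  have hq0 : ∀ w, 0 ≤ q w := fun w =>
    div_nonneg (Real.sqrt_nonneg _) (Real.sqrt_nonneg _)
  have hfint : Integrable f := A_int n hn0
  have hf0 : ∀ w, 0 ≤ f w := fun w => mul_nonneg (Real.exp_pos _).le (hq0 w)
  set s : Set ℝ := Set.Ioc (-1:ℝ) 1 with hsdef
  have hs : MeasurableSet s := measurableSet_Ioc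
  have hsplit : (∫ w in s, f w) + (∫ w in sᶜ, f w) = ∫ w, f w :=
    integral_add_compl hs hfint
  have hqint : IntegrableOn q s := hqc.integrableOn_Ioc
  have harsinh := arsinh_integral n hnp
  have hub1 : (∫ w in s, f w) ≤ ∫ w in s, q w := by
    refine setIntegral_mono_on hfint.integrableOn hqint hs (fun w _ => ?_)
    have : Real.exp (-w^2/2) ≤ 1 := Real.exp_le_one_iff.mpr (by nlinarith [sq_nonneg w])
    calc f w ≤ 1 * q w := by
          exact mul_le_mul_of_nonneg_right this (hq0 w)
      _ = q w := one_mul _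
  have hub2 : (∫ w in sᶜ, f w) ≤ ∫ w in sᶜ, Real.exp (-w^2/2) := by
    refine setIntegral_mono_on hfint.integrableOn gauss_L1.integrableOn hs.compl (fun w hw => ?_)
    have hw1 : 1 ≤ w^2 := by
      simp only [hsdef, Set.mem_compl_iff, Set.mem_Ioc, not_and_or, not_lt, not_le] at hw
      rcases hw with h | h <;> nlinarith
    have hle : Real.sqrt (2*n) ≤ Real.sqrt (2*n*w^2+1) :=
      Real.sqrt_le_sqrt (by nlinarith)
    have : q w ≤ 1 := by
      rw [hq, div_le_one (sqrt_denom_pos n w hn0)]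
      exact hle
    calc f w ≤ Real.exp (-w^2/2) * 1 :=
          mul_le_mul_of_nonneg_left this (Real.exp_pos _).le
      _ = Real.exp (-w^2/2) := mul_one _
  have hub3 : (∫ w in sᶜ, Real.exp (-w^2/2)) ≤ Real.sqrt (2*π) := by
    rw [← gauss_int]
    exact setIntegral_le_integral gauss_L1 (Eventually.of_forall (fun w => (Real.exp_pos _).le))
  have hlb1 : (∫ w in s, (q w - 1/2)) ≤ ∫ w in s, f w := by
    refine setIntegral_mono_on (hqint.sub (integrableOn_const (by simp [hsdef])))
      hfint.integrableOn hs (fun w hw => ?_)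
    have hws : |w| ≤ 1 := by
      simp only [hsdef, Set.mem_Ioc] at hw
      rw [abs_le]; constructor <;> linarith [hw.1, hw.2]
    have hX : 0 < Real.sqrt (2*n*w^2+1) := sqrt_denom_pos n w hn0
    have hkey : q w * w^2 ≤ |w| := by
      rw [hq, div_mul_eq_mul_div, div_le_iff₀ hX]
      calc Real.sqrt (2*n) * w^2 = |w| * (Real.sqrt (2*n) * |w|) := by
            rw [← Real.sqrt_sq_eq_abs]; rw [show Real.sqrt (w^2) * (Real.sqrt (2*n) * Real.sqrt (w^2)) = Real.sqrt (2*n) * (Real.sqrt (w^2) * Real.sqrt (w^2)) by ring, Real.mul_self_sqrt (sq_nonneg w)]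
        _ ≤ |w| * Real.sqrt (2*n*w^2+1) :=
            mul_le_mul_of_nonneg_left (sqrt_mul_abs_le n w hn0) (abs_nonneg w)
    have hexp : 1 - w^2/2 ≤ Real.exp (-w^2/2) := by
      have := Real.add_one_le_exp (-w^2/2)
      linarith
    have h1 : q w * w^2 ≤ 1 := le_trans hkey hws
    have hmm : (1 - w^2/2) * q w ≤ Real.exp (-w^2/2) * q w :=
      mul_le_mul_of_nonneg_right hexp (hq0 w)
    have hrr : (1 - w^2/2) * q w = q w - (q w * w^2)/2 := by ring
    show q w - 1/2 ≤ Real.exp (-w^2/2) * q w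
    linarith
  have hlb2 : (∫ w in s, (q w - 1/2)) = 2 * Real.arsinh (Real.sqrt (2*n)) - 1 := by
    rw [integral_sub hqint (integrableOn_const (by simp [hsdef]))]
    rw [harsinh, setIntegral_const]
    simp [hsdef, Real.volume_Ioc]
    norm_num
  have hlb3 : (∫ w in s, f w) ≤ ∫ w, f w := setIntegral_le_integral hfint
    (Eventually.of_forall hf0)
  constructor
  · calc 2 * Real.arsinh (Real.sqrt (2*n)) - 1 = ∫ w in s, (q w - 1/2) := hlb2.symm
      _ ≤ ∫ w in s, f w := hlb1
      _ ≤ ∫ w, f w := hlb3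
  · calc (∫ w, f w) = (∫ w in s, f w) + (∫ w in sᶜ, f w) := hsplit.symm
      _ ≤ (∫ w in s, q w) + Real.sqrt (2*π) := add_le_add hub1 (le_trans hub2 hub3)
      _ = 2 * Real.arsinh (Real.sqrt (2*n)) + Real.sqrt (2*π) := by rw [harsinh]

lemma arsinh_log_bounds (n : ℝ) (hn : 1 ≤ n) :
    Real.log 2 + Real.log n ≤ 2 * Real.arsinh (Real.sqrt (2*n)) ∧
    2 * Real.arsinh (Real.sqrt (2*n)) ≤ 2 * Real.log 4 + Real.log n := by
  have h2n : (0:ℝ) < 2*n := by linarith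
  have hs2n : 0 < Real.sqrt (2*n) := Real.sqrt_pos.mpr h2n
  have hsq : Real.sqrt (2*n) ^ 2 = 2*n := Real.sq_sqrt h2n.le
  have harsinh : Real.arsinh (Real.sqrt (2*n))
      = Real.log (Real.sqrt (2*n) + Real.sqrt (1 + 2*n)) := by
    rw [Real.arsinh, hsq]
  constructor
  · have hlow : Real.log (Real.sqrt (2*n)) ≤ Real.log (Real.sqrt (2*n) + Real.sqrt (1+2*n)) :=
      Real.log_le_log hs2n (by nlinarith [Real.sqrt_nonneg (1+2*n)])
    have : Real.log (Real.sqrt (2*n)) = Real.log (2*n) / 2 := Real.log_sqrt h2n.le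
    rw [harsinh]
    have hl2n : Real.log (2*n) = Real.log 2 + Real.log n := Real.log_mul (by norm_num) (by linarith)
    linarith
  · have h4n : Real.sqrt (2*n) + Real.sqrt (1+2*n) ≤ 4 * Real.sqrt n := by
      have h1 : Real.sqrt (2*n) ≤ Real.sqrt (4*n) := Real.sqrt_le_sqrt (by linarith)
      have h2 : Real.sqrt (1+2*n) ≤ Real.sqrt (4*n) := Real.sqrt_le_sqrt (by linarith)
      have h3 : Real.sqrt (4*n) = 2 * Real.sqrt n := by
        rw [show (4:ℝ)*n = 2^2 * n by ring, Real.sqrt_mul (by positivity),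
          Real.sqrt_sq (by norm_num)]
      linarith
    have hpos : 0 < Real.sqrt (2*n) + Real.sqrt (1+2*n) := by positivity
    have hup : Real.log (Real.sqrt (2*n) + Real.sqrt (1+2*n)) ≤ Real.log (4 * Real.sqrt n) :=
      Real.log_le_log hpos h4n
    have h5 : Real.log (4 * Real.sqrt n) = Real.log 4 + Real.log n / 2 := by
      rw [Real.log_mul (by norm_num) (by positivity), Real.log_sqrt (by linarith)]
    rw [harsinh]
    linarith

lemma tendsto_one_add_div_log (c : ℝ) :
    Tendsto (fun n : ℝ => (Real.log n + c) / Real.log n) atTop (𝓝 1) := by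
  have h1 : Tendsto (fun n : ℝ => (Real.log n)⁻¹) atTop (𝓝 0) :=
    Real.tendsto_log_atTop.inv_tendsto_atTop
  have h2 : Tendsto (fun n : ℝ => 1 + c * (Real.log n)⁻¹) atTop (𝓝 (1 + c * 0)) :=
    tendsto_const_nhds.add (h1.const_mul c)
  rw [show (1:ℝ) + c * 0 = 1 by ring] at h2
  apply h2.congr'
  filter_upwards [eventually_gt_atTop (1:ℝ)] with n hn
  have : Real.log n ≠ 0 := ne_of_gt (Real.log_pos hn)
  field_simp

lemma tendsto_sqrt_Ga :
    Tendsto (fun n : ℝ => ∫ w : ℝ, Real.sqrt (2*n) * (|w| * Real.exp (-w^2/2) / Real.sqrt (2*n*w^2+1)))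
      atTop (𝓝 (Real.sqrt (2*π))) := by
  rw [← gauss_int]
  apply tendsto_integral_filter_of_dominated_convergence
    (fun w : ℝ => Real.exp (-w^2/2))
  · filter_upwards [eventually_ge_atTop (0:ℝ)] with n hn
    apply Continuous.aestronglyMeasurable
    apply Continuous.mul continuous_const
    apply Continuous.div (by fun_prop) (by fun_prop)
    exact fun w => ne_of_gt (sqrt_denom_pos n w hn)
  · filter_upwards [eventually_ge_atTop (0:ℝ)] with n hn
    refine Eventually.of_forall (fun w => ?_)
    have hX := sqrt_denom_pos n w hn
    have h0 : 0 ≤ Real.sqrt (2*n) * (|w| * Real.exp (-w^2/2) / Real.sqrt (2*n*w^2+1)) := by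
      positivity
    rw [Real.norm_eq_abs, abs_of_nonneg h0]
    rw [show Real.sqrt (2*n) * (|w| * Real.exp (-w^2/2) / Real.sqrt (2*n*w^2+1))
      = (Real.sqrt (2*n) * |w|) * Real.exp (-w^2/2) / Real.sqrt (2*n*w^2+1) by ring]
    rw [div_le_iff₀ hX]
    calc Real.sqrt (2*n) * |w| * Real.exp (-w^2/2)
        ≤ Real.sqrt (2*n*w^2+1) * Real.exp (-w^2/2) :=
          mul_le_mul_of_nonneg_right (sqrt_mul_abs_le n w hn) (Real.exp_pos _).le
      _ = Real.exp (-w^2/2) * Real.sqrt (2*n*w^2+1) := mul_comm _ _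
  · exact gauss_L1
  · have hae : ∀ᵐ w : ℝ, w ≠ 0 := by
      refine ae_iff.mpr ?_
      simp only [ne_eq, not_not]
      simpa using measure_singleton (0:ℝ)
    filter_upwards [hae] with w hw
    have hw2 : 0 < w^2 := by positivity
    have ht : Tendsto (fun n : ℝ => (2*n*w^2+1)⁻¹) atTop (𝓝 0) := by
      apply Tendsto.inv_tendsto_atTop
      apply tendsto_atTop_add_const_right
      have := tendsto_id (α := ℝ).atTop_mul_const (by positivity : (0:ℝ) < 2*w^2)
      apply this.congr
      intro n; simp [id]; ring
    have hlim : Tendsto (fun n : ℝ => Real.sqrt (1 - (2*n*w^2+1)⁻¹)) atTop (𝓝 1) := by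
      have h1 : Tendsto (fun n : ℝ => 1 - (2*n*w^2+1)⁻¹) atTop (𝓝 (1 - 0)) :=
        tendsto_const_nhds.sub ht
      have := (Real.continuous_sqrt.tendsto (1 - 0 : ℝ)).comp h1
      simpa [Function.comp_def] using this
    have heq : ∀ᶠ n : ℝ in atTop,
        Real.exp (-w^2/2) * Real.sqrt (1 - (2*n*w^2+1)⁻¹)
        = Real.sqrt (2*n) * (|w| * Real.exp (-w^2/2) / Real.sqrt (2*n*w^2+1)) := by
      filter_upwards [eventually_ge_atTop (0:ℝ)] with n hn
      have hXpos : (0:ℝ) < 2*n*w^2+1 := by nlinarith [sq_nonneg w]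
      have h1 : Real.sqrt (2*n) * |w| = Real.sqrt (2*n*w^2) := by
        rw [show 2*n*w^2 = (2*n) * w^2 by ring, Real.sqrt_mul (show (0:ℝ) ≤ 2*n by linarith) (w^2), Real.sqrt_sq_eq_abs]
      have h2 : (1 : ℝ) - (2*n*w^2+1)⁻¹ = 2*n*w^2 / (2*n*w^2+1) := by
        field_simp
        ring
      rw [h2, Real.sqrt_div (by positivity), ← h1]
      field_simp
    have h := hlim.const_mul (Real.exp (-w^2/2))
    rw [mul_one] at h
    exact Tendsto.congr' heq h

lemma sqrt_Fa_eq (n : ℝ) : Real.sqrt (2*n) * Fa n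
    = ∫ w : ℝ, Real.exp (-w^2/2) * (Real.sqrt (2*n) / Real.sqrt (2*n*w^2+1)) := by
  unfold Fa
  rw [← integral_const_mul]
  congr 1; funext w; ring

lemma tendsto_A : Tendsto (fun n : ℝ => Real.sqrt (2*n) * Fa n / Real.log n) atTop (𝓝 1) := by
  apply tendsto_of_tendsto_of_tendsto_of_le_of_le'
    (tendsto_one_add_div_log (Real.log 2 - 1)) (tendsto_one_add_div_log (2 * Real.log 4 + Real.sqrt (2*π)))
  · filter_upwards [eventually_ge_atTop (1:ℝ), eventually_gt_atTop (1:ℝ)] with n hn1 hngt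
    have hlog : 0 < Real.log n := Real.log_pos hngt
    rw [div_le_div_iff_of_pos_right hlog, sqrt_Fa_eq]
    have h1 := (A_bounds n hn1).1
    have h2 := (arsinh_log_bounds n hn1).1
    linarith
  · filter_upwards [eventually_ge_atTop (1:ℝ), eventually_gt_atTop (1:ℝ)] with n hn1 hngt
    have hlog : 0 < Real.log n := Real.log_pos hngt
    rw [div_le_div_iff_of_pos_right hlog, sqrt_Fa_eq]
    have h1 := (A_bounds n hn1).2
    have h2 := (arsinh_log_bounds n hn1).2
    linarith

/-- `log n · (Z₁(n)/Z(n)) → √(2π)` as `n → ∞`; in particular `Z₁(n)/Z(n) → 0`. -/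
theorem ratio_Z1a_Za :
    Tendsto (fun n : ℝ => Real.log n * (Z1a n / Za n)) atTop
      (nhds (Real.sqrt (2 * π))) ∧
    Tendsto (fun n : ℝ => Z1a n / Za n) atTop (nhds 0) := by
  have hG : Tendsto (fun n : ℝ => Real.sqrt (2*n) * Ga n) atTop (𝓝 (Real.sqrt (2*π))) := by
    apply tendsto_sqrt_Ga.congr
    intro n
    unfold Ga
    rw [integral_const_mul]
  have hdiv : Tendsto (fun n : ℝ =>
      (Real.sqrt (2*n) * Ga n) / (Real.sqrt (2*n) * Fa n / Real.log n)) atTop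
      (𝓝 (Real.sqrt (2*π) / 1)) := hG.div tendsto_A one_ne_zero
  rw [div_one] at hdiv
  have hmain : Tendsto (fun n : ℝ => Real.log n * (Z1a n / Za n)) atTop
      (𝓝 (Real.sqrt (2*π))) := by
    apply hdiv.congr'
    filter_upwards [eventually_gt_atTop (1:ℝ)] with n hn
    have hn0 : (0:ℝ) ≤ n := by linarith
    have hs2n : Real.sqrt (2*n) ≠ 0 := by positivity
    have hs2pi : Real.sqrt (2*π) ≠ 0 := by positivity
    rw [Za_eq n hn0, Z1a_eq n hn0]
    rw [div_div_div_comm, div_self hs2pi, div_one]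
    rw [div_div_eq_mul_div, mul_comm (Real.sqrt (2*n) * Ga n) (Real.log n),
      mul_div_assoc, mul_div_mul_left _ _ hs2n]
  refine ⟨hmain, ?_⟩
  have hinv : Tendsto (fun n : ℝ => (Real.log n)⁻¹) atTop (𝓝 0) :=
    Real.tendsto_log_atTop.inv_tendsto_atTop
  have h0 := hmain.mul hinv
  rw [mul_zero] at h0
  apply h0.congr'
  filter_upwards [eventually_gt_atTop (1:ℝ)] with n hn
  have hlog : Real.log n ≠ 0 := ne_of_gt (Real.log_pos hn)
  rw [mul_comm, ← mul_assoc, inv_mul_cancel₀ hlog, one_mul]
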